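/- For every polyadic space X, the π-weight of X equals the weight of X: π(X) = w(X). -/

import Mathlib

open Cardinal Set Function

universe u

noncomputable section

/-- The density of a topological space: least cardinality of a dense subset. -/
def tdensity (X : Type u) [TopologicalSpace X] : Cardinal.{u} :=
  sInf {c : Cardinal.{u} | ∃ s : Set X, Dense s ∧ #s = c}

/-- The weight of a topological space: least cardinality of a base. -/
def tweight (X : Type u) [TopologicalSpace X] : Cardinal.{u} :=
  sInf {c : Cardinal.{u} | ∃ B : Set (Set X), TopologicalSpace.IsTopologicalBasis B ∧ #B = c}

/-- The π-weight: least cardinality of a π-base. -/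
def piWeight (X : Type u) [TopologicalSpace X] : Cardinal.{u} :=
  sInf {c : Cardinal.{u} | ∃ B : Set (Set X),
    (∀ U ∈ B, IsOpen U ∧ U.Nonempty) ∧
    (∀ V : Set X, IsOpen V → V.Nonempty → ∃ U ∈ B, U ⊆ V) ∧ #B = c}

/-- ĉ(X): the least cardinal κ such that X has no pairwise disjoint family of κ
nonempty open sets. -/
def hatCell (X : Type u) [TopologicalSpace X] : Cardinal.{u} :=
  sInf {c : Cardinal.{u} | ¬ ∃ 𝒰 : Set (Set X),
    (∀ U ∈ 𝒰, IsOpen U ∧ U.Nonempty) ∧ 𝒰.PairwiseDisjoint id ∧ #𝒰 = c}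

/-- `H` is a closed G_λ set: closed and the intersection of at most λ open sets. -/
def IsClosedGLambda (lam : Cardinal.{u}) {X : Type u} [TopologicalSpace X] (H : Set X) : Prop :=
  IsClosed H ∧ ∃ 𝒰 : Set (Set X), (∀ U ∈ 𝒰, IsOpen U) ∧ #𝒰 ≤ lam ∧ H = ⋂₀ 𝒰

/-- X ∈ Γ(λ): every closed G_λ set has density ≤ λ. -/
def InGamma (lam : Cardinal.{u}) (X : Type u) [TopologicalSpace X] : Prop :=
  ∀ H : Set X, IsClosedGLambda lam H → tdensity ↥H ≤ lam

/-- `S` witnesses `X ∈ Δ(λ)`. -/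
def DeltaWitness (lam : Cardinal.{u}) (X : Type u) [TopologicalSpace X] (S : Set X) : Prop :=
  Dense S ∧
  (∀ T : Set X, T ⊆ S → #T < lam → tweight ↥(closure T) < lam) ∧
  (∀ (Y : Type u) (_ : TopologicalSpace Y), T2Space Y → ∀ f : X → Y,
     Continuous f → Surjective f → tweight Y = lam → #(f '' S) = lam)

/-- X ∈ Δ(λ). -/
def InDelta (lam : Cardinal.{u}) (X : Type u) [TopologicalSpace X] : Prop :=
  lam ≤ tweight X ∧ ∃ S : Set X, DeltaWitness lam X S

/-- A canonical discrete space of cardinality `c`. -/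
instance (c : Cardinal.{u}) : TopologicalSpace c.out := ⊥

instance (c : Cardinal.{u}) : DiscreteTopology c.out := ⟨rfl⟩

/-- A(μ): one-point compactification of a discrete space of cardinality μ. -/
def ACompact (μ : Cardinal.{u}) : Type u := OnePoint μ.out

instance (μ : Cardinal.{u}) : TopologicalSpace (ACompact μ) :=
  inferInstanceAs (TopologicalSpace (OnePoint μ.out))

/-- A(μ)^κ. -/
def APow (μ κ : Cardinal.{u}) : Type u := κ.out → ACompact μ

instance (μ κ : Cardinal.{u}) : TopologicalSpace (APow μ κ) :=
  inferInstanceAs (TopologicalSpace (κ.out → ACompact μ))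

/-- The set of finite-support points of A(μ)^κ. -/
def finSupport (μ κ : Cardinal.{u}) : Set (APow μ κ) :=
  {x | {ξ | x ξ ≠ (OnePoint.infty : OnePoint μ.out)}.Finite}

/-- X is polyadic: a continuous image of some A(μ)^κ. -/
def IsPolyadic (X : Type u) [TopologicalSpace X] : Prop :=
  ∃ μ κ : Cardinal.{u}, ℵ₀ ≤ μ ∧ ∃ f : APow μ κ → X, Continuous f ∧ Surjective f

/-! ### Auxiliary lemmas -/

lemma mk_finset_le' (α : Type u) : #(Finset α) ≤ max ℵ₀ #α := by
  rcases finite_or_infinite α with h | h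
  · exact le_max_of_le_left mk_le_aleph0
  · exact le_max_of_le_right (Cardinal.mk_finset_of_infinite α).le

lemma exists_basis_tweight (X : Type u) [TopologicalSpace X] :
    ∃ B : Set (Set X), TopologicalSpace.IsTopologicalBasis B ∧ #B = tweight X := by
  have hne : {c : Cardinal.{u} | ∃ B : Set (Set X),
      TopologicalSpace.IsTopologicalBasis B ∧ #B = c}.Nonempty :=
    ⟨_, {U | IsOpen U}, TopologicalSpace.isTopologicalBasis_opens, rfl⟩
  exact csInf_mem hne

lemma exists_piBase (X : Type u) [TopologicalSpace X] :
    ∃ B : Set (Set X), (∀ U ∈ B, IsOpen U ∧ U.Nonempty) ∧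
      (∀ V : Set X, IsOpen V → V.Nonempty → ∃ U ∈ B, U ⊆ V) ∧ #B = piWeight X := by
  have hne : {c : Cardinal.{u} | ∃ B : Set (Set X), (∀ U ∈ B, IsOpen U ∧ U.Nonempty) ∧
      (∀ V : Set X, IsOpen V → V.Nonempty → ∃ U ∈ B, U ⊆ V) ∧ #B = c}.Nonempty :=
    ⟨_, {U | IsOpen U ∧ U.Nonempty}, fun U hU => hU,
      fun V hV hVne => ⟨V, ⟨hV, hVne⟩, le_refl _⟩, rfl⟩
  exact csInf_mem hne

lemma tweight_le {X : Type u} [TopologicalSpace X] {B : Set (Set X)}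
    (hB : TopologicalSpace.IsTopologicalBasis B) : tweight X ≤ #B := csInf_le' ⟨B, hB, rfl⟩

lemma piWeight_le_tweight (X : Type u) [TopologicalSpace X] :
    piWeight X ≤ tweight X := by
  obtain ⟨B, hB, hcard⟩ := exists_basis_tweight X
  have h1 : piWeight X ≤ #(B \ {∅} : Set (Set X)) := by
    refine csInf_le' ⟨B \ {∅}, ?_, ?_, rfl⟩
    · rintro U ⟨hU, hU0⟩
      exact ⟨hB.isOpen hU, nonempty_iff_ne_empty.2 hU0⟩
    · intro V hV hVne
      obtain ⟨x, hx⟩ := hVne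
      obtain ⟨U, hUB, hxU, hUV⟩ := hB.exists_subset_of_mem_open hx hV
      exact ⟨U, ⟨hUB, fun h => (h ▸ hxU : x ∈ (∅ : Set X))⟩, hUV⟩
  calc piWeight X ≤ _ := h1
    _ ≤ #B := mk_le_mk_of_subset diff_subset
    _ = tweight X := hcard

/-- Weight of a `T2` image of a compact space is bounded by the size of a basis
of the domain. -/
lemma tweight_le_of_image {Y X : Type u} [TopologicalSpace Y] [TopologicalSpace X]
    [CompactSpace Y] [T2Space X] {g : Y → X} (hg : Continuous g) (hs : Surjective g)
    {A : Set (Set Y)} (hA : TopologicalSpace.IsTopologicalBasis A) :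
    tweight X ≤ max ℵ₀ #A := by
  classical
  set G : Finset ↥A → Set X := fun F => (g '' (⋃ a ∈ F, (a : Set Y))ᶜ)ᶜ with hG
  have hopen : ∀ F : Finset ↥A, IsOpen (G F) := by
    intro F
    have h1 : IsOpen (⋃ a ∈ F, (a : Set Y)) :=
      isOpen_biUnion (fun a _ => hA.isOpen a.2)
    exact (hg.isClosedMap _ h1.isClosed_compl).isOpen_compl
  have hbasis : TopologicalSpace.IsTopologicalBasis (Set.range G) := by
    refine TopologicalSpace.isTopologicalBasis_of_isOpen_of_nhds ?_ ?_
    · rintro u ⟨F, rfl⟩; exact hopen F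
    · intro x V hxV hV
      have hfibc : IsCompact (g ⁻¹' {x}) :=
        (isClosed_singleton.preimage hg).isCompact
      have hsub : g ⁻¹' {x} ⊆ ⋃ a ∈ {a ∈ A | a ⊆ g ⁻¹' V}, a := by
        intro y hy
        have hyV : y ∈ g ⁻¹' V := by
          simp only [mem_preimage, mem_singleton_iff] at hy
          simpa [mem_preimage, hy] using hxV
        obtain ⟨a, haA, hya, haV⟩ :=
          hA.exists_subset_of_mem_open hyV (hV.preimage hg)
        exact mem_biUnion ⟨haA, haV⟩ hya
      obtain ⟨b', hb'sub, hb'fin, hcov⟩ :=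
        hfibc.elim_finite_subcover_image (fun a ha => hA.isOpen ha.1) hsub
      have hfin : (Subtype.val ⁻¹' b' : Set ↥A).Finite :=
        hb'fin.preimage (Set.injOn_of_injective Subtype.val_injective)
      set F : Finset ↥A := hfin.toFinset with hF
      have hunion : (⋃ a ∈ F, (a : Set Y)) = ⋃ i ∈ b', i := by
        ext z
        simp only [mem_iUnion, hF, Set.Finite.mem_toFinset, mem_preimage]
        constructor
        · rintro ⟨a, ha, hz⟩; exact ⟨a, ha, hz⟩
        · rintro ⟨i, hi, hz⟩; exact ⟨⟨i, (hb'sub hi).1⟩, hi, hz⟩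
      refine ⟨G F, ⟨F, rfl⟩, ?_, ?_⟩
      · intro hmem
        rcases hmem with ⟨z, hz, hzx⟩
        exact hz (by rw [hunion]; exact hcov (by simp [mem_preimage, hzx]))
      · intro y hy
        obtain ⟨z, rfl⟩ := hs y
        have hz : z ∈ ⋃ a ∈ F, (a : Set Y) := by
          by_contra hzc
          exact hy ⟨z, hzc, rfl⟩
        rw [hunion] at hz
        obtain ⟨i, hi, hzi⟩ := by simpa only [mem_iUnion] using hz
        exact (hb'sub hi).2 hzi
  calc tweight X ≤ #(Set.range G) := tweight_le hbasis
    _ ≤ #(Finset ↥A) := mk_range_le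
    _ ≤ max ℵ₀ #↥A := mk_finset_le' _

section OnePointLemmas
variable {β : Type u} [TopologicalSpace β] [DiscreteTopology β]

lemma isOpen_singleton_coe' (b : β) : IsOpen ({(b : OnePoint β)} : Set (OnePoint β)) := by
  rw [OnePoint.isOpen_def]
  exact ⟨fun h => absurd h (by simp), isOpen_discrete _⟩

lemma isClosed_singleton_coe' (b : β) : IsClosed ({(b : OnePoint β)} : Set (OnePoint β)) := by
  rw [← isOpen_compl_iff, OnePoint.isOpen_def]
  constructor
  · intro _
    have h2 : (OnePoint.some ⁻¹' ({(b : OnePoint β)}ᶜ))ᶜ = {b} := by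
      ext c; simp [OnePoint.coe_eq_coe]
    rw [h2]; exact (Set.finite_singleton b).isCompact
  · exact isOpen_discrete _

lemma compact_nbhd_finite' {u : Set (OnePoint β)} (hu : IsOpen u) (hinf : OnePoint.infty ∈ u) :
    ((OnePoint.some ⁻¹' u)ᶜ : Set β).Finite := by
  rw [OnePoint.isOpen_def] at hu
  exact (hu.1 hinf).finite_of_discrete

variable {ι : Type u} (C : ι → Set (OnePoint β))

/-- Index set for the canonical basis of a product of "small" subspaces of
one-point compactifications. -/
def NT : Set (ι × β) := {p | (p.2 : OnePoint β) ∈ C p.1}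

/-- Canonical basic open sets of `univ.pi C`. -/
def Nbox (tp : Finset ↥(NT C) × Finset ↥(NT C)) : Set ↥(Set.univ.pi C) :=
  {x | (∀ p ∈ tp.1, x.val (p : ι × β).1 = ((p : ι × β).2 : OnePoint β)) ∧
       (∀ p ∈ tp.2, x.val (p : ι × β).1 ≠ ((p : ι × β).2 : OnePoint β))}

lemma isOpen_Nbox (tp : Finset ↥(NT C) × Finset ↥(NT C)) : IsOpen (Nbox C tp) := by
  have h1 : Nbox C tp =
      (⋂ p ∈ tp.1, {x : ↥(Set.univ.pi C) |
        x.val (p : ι × β).1 = ((p : ι × β).2 : OnePoint β)}) ∩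
      (⋂ p ∈ tp.2, {x : ↥(Set.univ.pi C) |
        x.val (p : ι × β).1 ≠ ((p : ι × β).2 : OnePoint β)}) := by
    ext x; simp [Nbox, Set.mem_iInter]
  rw [h1]
  refine IsOpen.inter ?_ ?_
  · refine isOpen_biInter_finset (fun p _ => ?_)
    have hcont : Continuous (fun x : ↥(Set.univ.pi C) => x.val (p : ι × β).1) :=
      (continuous_apply _).comp continuous_subtype_val
    exact (isOpen_singleton_coe' (p : ι × β).2).preimage hcont
  · refine isOpen_biInter_finset (fun p _ => ?_)
    have hcont : Continuous (fun x : ↥(Set.univ.pi C) => x.val (p : ι × β).1) :=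
      (continuous_apply _).comp continuous_subtype_val
    exact (isOpen_compl_iff.2 (isClosed_singleton_coe' (p : ι × β).2)).preimage hcont

lemma basis_Nbox : TopologicalSpace.IsTopologicalBasis (Set.range (Nbox C)) := by
  refine TopologicalSpace.isTopologicalBasis_of_isOpen_of_nhds ?_ ?_
  · rintro V ⟨tp, rfl⟩; exact isOpen_Nbox C tp
  · intro x W hxW hW
    obtain ⟨W', hW', hWeq⟩ := isOpen_induced_iff.1 hW
    have hxW' : x.val ∈ W' := by rw [← hWeq] at hxW; exact hxW
    obtain ⟨I, u, hIu, hpi⟩ := isOpen_pi_iff.1 hW' x.val hxW'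
    have hs1fin : ({p : ↥(NT C) | p.val.1 ∈ I ∧
        x.val p.val.1 = (p.val.2 : OnePoint β)}).Finite := by
      refine Set.Finite.of_finite_image ?_ ?_ (f := fun p => p.val.1)
      · exact I.finite_toSet.subset (by rintro i ⟨p, hp, rfl⟩; exact hp.1)
      · intro p hp q hq h
        simp only [Set.mem_setOf_eq] at hp hq h
        have h2 : ((p : ι × β).2 : OnePoint β) = ((q : ι × β).2 : OnePoint β) := by
          rw [← hp.2, h, hq.2]
        apply Subtype.ext; apply Prod.ext h
        exact Option.some_injective β h2
    have hs2fin : ({p : ↥(NT C) | p.val.1 ∈ I ∧ x.val p.val.1 = OnePoint.infty ∧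
        (p.val.2 : OnePoint β) ∉ u p.val.1}).Finite := by
      refine Set.Finite.of_finite_image ?_ (Set.injOn_of_injective Subtype.val_injective)
      have hsub : (fun p : ↥(NT C) => p.val) ''
          {p | p.val.1 ∈ I ∧ x.val p.val.1 = OnePoint.infty ∧
            (p.val.2 : OnePoint β) ∉ u p.val.1}
          ⊆ ⋃ i ∈ {i ∈ (I : Set ι) | x.val i = OnePoint.infty},
              {i} ×ˢ ((OnePoint.some ⁻¹' (u i))ᶜ : Set β) := by
        rintro q ⟨p, ⟨hpI, hpinf, hpu⟩, rfl⟩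
        exact Set.mem_biUnion ⟨hpI, hpinf⟩ ⟨rfl, hpu⟩
      refine Set.Finite.subset ?_ hsub
      refine Set.Finite.biUnion (I.finite_toSet.subset (fun i hi => hi.1)) ?_
      rintro i ⟨hiI, hiinf⟩
      refine (Set.finite_singleton i).prod (compact_nbhd_finite' (hIu i hiI).1 ?_)
      rw [← hiinf]; exact (hIu i hiI).2
    refine ⟨Nbox C (hs1fin.toFinset, hs2fin.toFinset), ⟨_, rfl⟩, ?_, ?_⟩
    · constructor
      · intro p hp
        exact (hs1fin.mem_toFinset.1 hp).2
      · intro p hp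
        rw [(hs2fin.mem_toFinset.1 hp).2.1]
        exact fun h => OnePoint.infty_ne_coe _ h
    · intro y hy
      have hyW' : y.val ∈ W' := by
        apply hpi
        intro i hi
        by_cases hx : x.val i = OnePoint.infty
        · by_cases hyu : y.val i ∈ u i
          · exact hyu
          · exfalso
            have hyi : y.val i ≠ OnePoint.infty := by
              intro h
              rw [h, ← hx] at hyu
              exact hyu (hIu i hi).2
            obtain ⟨c, hc⟩ := OnePoint.ne_infty_iff_exists.1 hyi
            have hcC : (c : OnePoint β) ∈ C i := by
              have := y.property i (Set.mem_univ i); rwa [← hc] at this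
            have hp2 : (⟨(i, c), hcC⟩ : ↥(NT C)) ∈ hs2fin.toFinset :=
              hs2fin.mem_toFinset.2 ⟨hi, hx, by rwa [hc]⟩
            exact hy.2 _ hp2 hc.symm
        · obtain ⟨b, hb⟩ := OnePoint.ne_infty_iff_exists.1 hx
          have hbC : (b : OnePoint β) ∈ C i := by
            have := x.property i (Set.mem_univ i); rwa [← hb] at this
          have hp1 : (⟨(i, b), hbC⟩ : ↥(NT C)) ∈ hs1fin.toFinset :=
            hs1fin.mem_toFinset.2 ⟨hi, hb.symm⟩
          have hyb : y.val i = (b : OnePoint β) := hy.1 _ hp1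
          rw [hyb, hb]
          exact (hIu i hi).2
      rw [← hWeq]; exact hyW'
end OnePointLemmas

lemma tweight_le_of_finite_piBase {X : Type u} [TopologicalSpace X] [T1Space X]
    {B : Set (Set X)} (hfin : B.Finite)
    (hop : ∀ U ∈ B, IsOpen U ∧ U.Nonempty)
    (hpi : ∀ V : Set X, IsOpen V → V.Nonempty → ∃ U ∈ B, U ⊆ V) :
    tweight X ≤ #B := by
  classical
  have key : ∀ V : Set X, IsOpen V → V.Nonempty → ∃ x ∈ V, ({x} : Set X) ∈ B := by
    intro V hV hVne
    obtain ⟨U0, hU0B, hU0V⟩ := hpi V hV hVne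
    have hSfin : {U | U ∈ B ∧ U ⊆ V}.Finite := hfin.subset (fun U hU => hU.1)
    have hSne : {U | U ∈ B ∧ U ⊆ V}.Nonempty := ⟨U0, hU0B, hU0V⟩
    obtain ⟨U, hUS, hUmin⟩ : ∃ U ∈ {U | U ∈ B ∧ U ⊆ V}, ∀ U' ∈ {U | U ∈ B ∧ U ⊆ V},
        U' ⊆ U → U = U' := by
      obtain ⟨U, hU⟩ := Set.Finite.exists_minimal hSfin hSne
      exact ⟨U, hU.1, fun U' h1 h2 => subset_antisymm (hU.2 h1 h2) h2⟩
    obtain ⟨x, hxU⟩ := (hop U hUS.1).2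
    have hUx : U = {x} := by
      refine subset_antisymm (fun y hy => ?_) (singleton_subset_iff.2 hxU)
      by_contra hyx
      have hW : IsOpen (U ∩ {y}ᶜ) := (hop U hUS.1).1.inter isClosed_singleton.isOpen_compl
      have hWne : (U ∩ {y}ᶜ).Nonempty :=
        ⟨x, hxU, fun h => hyx (mem_singleton_iff.1 h ▸ rfl)⟩
      obtain ⟨U', hU'B, hU'W⟩ := hpi _ hW hWne
      have hU'S : U' ∈ {U | U ∈ B ∧ U ⊆ V} :=
        ⟨hU'B, (hU'W.trans inter_subset_left).trans hUS.2⟩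
      have hU'U : U' ⊆ U := hU'W.trans inter_subset_left
      have heq : U = U' := hUmin U' hU'S hU'U
      rw [heq] at hy
      exact (hU'W hy).2 rfl
    exact ⟨x, hUS.2 (hUx ▸ rfl : x ∈ U), hUx ▸ hUS.1⟩
  set D : Set X := {x | ({x} : Set X) ∈ B} with hD
  have hDfin : D.Finite := by
    refine Set.Finite.of_finite_image (f := fun x => ({x} : Set X)) ?_ ?_
    · exact hfin.subset (by rintro S ⟨x, hx, rfl⟩; exact hx)
    · intro a _ b _ h
      exact singleton_eq_singleton_iff.1 h
  have hDdense : Dense D := by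
    rw [dense_iff_inter_open]
    intro V hV hVne
    obtain ⟨x, hxV, hxB⟩ := key V hV hVne
    exact ⟨x, hxV, hxB⟩
  have hDuniv : D = Set.univ := by
    have h2 := hDdense.closure_eq
    rwa [hDfin.isClosed.closure_eq] at h2
  have hsingB : ∀ x : X, ({x} : Set X) ∈ B := fun x => (hDuniv ▸ mem_univ x : x ∈ D)
  have hbasis : TopologicalSpace.IsTopologicalBasis {S : Set X | ∃ x, S = {x}} := by
    refine TopologicalSpace.isTopologicalBasis_of_isOpen_of_nhds ?_ ?_
    · rintro S ⟨x, rfl⟩; exact (hop _ (hsingB x)).1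
    · intro a V haV _
      exact ⟨{a}, ⟨a, rfl⟩, rfl, singleton_subset_iff.2 haV⟩
  have hsub : {S : Set X | ∃ x, S = {x}} ⊆ B := by
    rintro S ⟨x, rfl⟩; exact hsingB x
  exact (tweight_le hbasis).trans (mk_le_mk_of_subset hsub)

/-- π(X) = w(X) for polyadic X. -/
theorem statement14 {X : Type u} [TopologicalSpace X] [CompactSpace X] [T2Space X]
    (hX : IsPolyadic X) : piWeight X = tweight X := by
  classical
  refine le_antisymm (piWeight_le_tweight X) ?_
  obtain ⟨μ, κ, hμ, f, hf, hfs⟩ := hX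
  obtain ⟨B, hBopen, hBpi, hBcard⟩ := exists_piBase X
  rw [← hBcard]
  by_cases hBfin : B.Finite
  · exact tweight_le_of_finite_piBase hBfin hBopen hBpi
  · have hBinf : Infinite ↥B := Set.infinite_coe_iff.2 hBfin
    -- view `f` as a map on the product of one-point compactifications
    set F : (κ.out → OnePoint μ.out) → X := f with hF
    have hFc : Continuous F := hf
    have hFs : Surjective F := hfs
    -- choose, for each member of the π-base, a finitely supported point mapping into it
    have step : ∀ U : ↥B, ∃ (I : Finset κ.out) (p : κ.out → OnePoint μ.out),
        F p ∈ (U : Set X) ∧ ∀ i, p i ≠ OnePoint.infty → i ∈ I := by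
      intro U
      obtain ⟨x, hx⟩ := (hBopen U U.2).2
      obtain ⟨z, hz⟩ := hFs x
      have hopen : IsOpen (F ⁻¹' (U : Set X)) := (hBopen U U.2).1.preimage hFc
      have hzU : z ∈ F ⁻¹' (U : Set X) := by rw [mem_preimage, hz]; exact hx
      obtain ⟨I, u, hIu, hpisub⟩ := isOpen_pi_iff.1 hopen z hzU
      refine ⟨I, fun i => if h : i ∈ I then
          (if OnePoint.infty ∈ u i then OnePoint.infty else z i) else OnePoint.infty, ?_, ?_⟩
      · apply hpisub
        intro i hi
        dsimp only
        split_ifs with h1 h2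
        · exact h2
        · exact (hIu i h1).2
        · exact absurd hi h1
      · intro i hpi'
        by_contra hiI
        simp only [dif_neg hiI] at hpi'
        exact hpi' rfl
    choose I p hfp hsupp using step
    -- the small compact subproduct
    set C : κ.out → Set (OnePoint μ.out) :=
      fun i => insert OnePoint.infty {a | ∃ U : ↥B, p U i = a} with hC
    have hCcl : ∀ i, IsClosed (C i) := by
      intro i
      rw [← isOpen_compl_iff, OnePoint.isOpen_def]
      exact ⟨fun h => absurd (mem_insert _ _) h, isOpen_discrete _⟩
    have hQcomp : IsCompact (Set.univ.pi C) :=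
      isCompact_univ_pi (fun i => (hCcl i).isCompact)
    have hQcs : CompactSpace ↥(Set.univ.pi C) := isCompact_iff_compactSpace.1 hQcomp
    have hpQ : ∀ U : ↥B, p U ∈ Set.univ.pi C := by
      intro U i _
      exact mem_insert_iff.2 (Or.inr ⟨U, rfl⟩)
    -- the restriction of F to the subproduct is onto X
    have himg : F '' (Set.univ.pi C) = Set.univ := by
      by_contra hne
      have hKcl : IsClosed (F '' (Set.univ.pi C)) := (hQcomp.image hFc).isClosed
      obtain ⟨U, hUB, hUsub⟩ :=
        hBpi _ hKcl.isOpen_compl (Set.nonempty_compl.2 hne)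
      exact hUsub (hfp ⟨U, hUB⟩) ⟨_, hpQ ⟨U, hUB⟩, rfl⟩
    set g : ↥(Set.univ.pi C) → X := fun q => F q.val with hg
    have hgc : Continuous g := hFc.comp continuous_subtype_val
    have hgs : Surjective g := by
      intro x
      have hx : x ∈ F '' (Set.univ.pi C) := himg ▸ mem_univ x
      obtain ⟨z, hz, hzx⟩ := hx
      exact ⟨⟨z, hz⟩, hzx⟩
    -- weight estimates
    have h1 : tweight X ≤ max ℵ₀ #(Set.range (Nbox C)) :=
      tweight_le_of_image hgc hgs (basis_Nbox C)
    -- the index set of the basis is small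
    have hTB : #(NT C) ≤ #↥B := by
      have hsub : NT C ⊆ ⋃ U : ↥B,
          {q : κ.out × μ.out | q.1 ∈ I U ∧ p U q.1 = (q.2 : OnePoint μ.out)} := by
        rintro ⟨i, b⟩ hib
        rcases mem_insert_iff.1 hib with h | ⟨U, hU⟩
        · exact absurd h (OnePoint.coe_ne_infty _)
        · refine mem_iUnion.2 ⟨U, ?_, hU⟩
          exact hsupp U i (by rw [hU]; exact (OnePoint.infty_ne_coe b).symm)
      have hSfin : ∀ U : ↥B,
          ({q : κ.out × μ.out | q.1 ∈ I U ∧ p U q.1 = (q.2 : OnePoint μ.out)}).Finite := by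
        intro U
        refine Set.Finite.of_finite_image ?_ ?_ (f := Prod.fst)
        · exact (I U).finite_toSet.subset (by rintro i ⟨q, hq, rfl⟩; exact hq.1)
        · intro q hq q' hq' h
          apply Prod.ext h
          have h2 : ((q.2 : OnePoint μ.out)) = (q'.2 : OnePoint μ.out) := by
            rw [← hq.2, h, hq'.2]
          exact Option.some_injective _ h2
      calc #(NT C)
          ≤ #(⋃ U : ↥B, {q : κ.out × μ.out | q.1 ∈ I U ∧ p U q.1 = (q.2 : OnePoint μ.out)}) :=
            mk_le_mk_of_subset hsub
        _ ≤ Cardinal.sum (fun U : ↥B =>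
            #({q : κ.out × μ.out | q.1 ∈ I U ∧ p U q.1 = (q.2 : OnePoint μ.out)})) :=
            mk_iUnion_le_sum_mk
        _ ≤ Cardinal.sum (fun _ : ↥B => ℵ₀) := by
            refine Cardinal.sum_le_sum _ _ (fun U => ?_)
            exact Cardinal.mk_le_aleph0_iff.2 ((hSfin U).countable.to_subtype)
        _ = #↥B * ℵ₀ := Cardinal.sum_const' _ _
        _ = #↥B := by
            rw [Cardinal.mul_eq_max (Cardinal.aleph0_le_mk _) le_rfl]
            exact max_eq_left (Cardinal.aleph0_le_mk _)
    have h2 : #(Set.range (Nbox C)) ≤ max ℵ₀ #(NT C) := by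
      calc #(Set.range (Nbox C))
          ≤ #(Finset ↥(NT C) × Finset ↥(NT C)) := mk_range_le
        _ = #(Finset ↥(NT C)) * #(Finset ↥(NT C)) := by
            simp [Cardinal.mk_prod]
        _ ≤ max ℵ₀ #(NT C) * max ℵ₀ #(NT C) :=
            mul_le_mul' (mk_finset_le' _) (mk_finset_le' _)
        _ = max ℵ₀ #(NT C) := Cardinal.mul_eq_self (le_max_left _ _)
    calc tweight X ≤ max ℵ₀ #(Set.range (Nbox C)) := h1
      _ ≤ max ℵ₀ (max ℵ₀ #(NT C)) := max_le_max le_rfl h2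
      _ = max ℵ₀ #(NT C) := by rw [← max_assoc, max_self]
      _ ≤ max ℵ₀ #↥B := max_le_max le_rfl hTB
      _ = #↥B := max_eq_right (Cardinal.aleph0_le_mk _)
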